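/- Let q be an even prime power and β ∈ F_q^*. The plane affine curve over F_q defined by X^2 + X + (β^3 + β^2 + 1)/β^4 + 1/Z = 0 is absolutely irreducible. -/

import Mathlib

open Polynomial MvPolynomial

/-- A polynomial `C a * X + 1` over a domain with `a ≠ 0` is irreducible. -/
lemma linear_const_one_irreducible {R : Type*} [CommRing R] [IsDomain R] {a : R} (ha : a ≠ 0) :
    Irreducible (Polynomial.C a * Polynomial.X + 1) := by
  have hdeg : (Polynomial.C a * Polynomial.X + 1).natDegree = 1 := by
    compute_degree!
  have hc0 : (Polynomial.C a * Polynomial.X + 1).coeff 0 = 1 := by simp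
  have hne : (Polynomial.C a * Polynomial.X + 1 : R[X]) ≠ 0 := by
    intro h0; rw [h0] at hdeg; simp at hdeg
  constructor
  · exact Polynomial.not_isUnit_of_natDegree_pos _ (by omega)
  · intro g h hgh
    have hg0 : g ≠ 0 := by rintro rfl; rw [zero_mul] at hgh; exact hne hgh
    have hh0 : h ≠ 0 := by rintro rfl; rw [mul_zero] at hgh; exact hne hgh
    have hsum : g.natDegree + h.natDegree = 1 := by
      rw [← Polynomial.natDegree_mul hg0 hh0, ← hgh, hdeg]
    have key : ∀ p r : R[X], p.natDegree = 0 → p * r = Polynomial.C a * Polynomial.X + 1 →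
        IsUnit p := by
      intro p r hp hpr
      obtain ⟨c, rfl⟩ := Polynomial.natDegree_eq_zero.mp hp
      have : c * r.coeff 0 = 1 := by
        have := congrArg (fun q => Polynomial.coeff q 0) hpr
        simpa using this
      exact Polynomial.isUnit_C.mpr (IsUnit.of_mul_eq_one _ this)
    rcases Nat.eq_zero_or_pos g.natDegree with hg | hg
    · exact Or.inl (key g h hg hgh.symm)
    · exact Or.inr (key h g (by omega) (by rw [mul_comm]; exact hgh.symm))

theorem stmt10 (q : ℕ) (hq : ∃ p n : ℕ, p.Prime ∧ 0 < n ∧ q = p ^ n) (hq2 : Even q)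
    (F : Type*) [Field F] [Fintype F] (hF : Fintype.card F = q) (β : F) (hβ : β ≠ 0) :
    Irreducible
      ((MvPolynomial.X 0) ^ 2 * MvPolynomial.X 1 + MvPolynomial.X 0 * MvPolynomial.X 1 +
        MvPolynomial.C (algebraMap F (AlgebraicClosure F) ((β ^ 3 + β ^ 2 + 1) / β ^ 4)) *
          MvPolynomial.X 1 + 1 :
        MvPolynomial (Fin 2) (AlgebraicClosure F)) := by
  set K := AlgebraicClosure F
  set c : K := algebraMap F K ((β ^ 3 + β ^ 2 + 1) / β ^ 4) with hc
  -- swap variables then pull out the first variable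
  let e : MvPolynomial (Fin 2) K ≃ₐ[K] Polynomial (MvPolynomial (Fin 1) K) :=
    (MvPolynomial.renameEquiv K (Equiv.swap (0 : Fin 2) 1)).trans (MvPolynomial.finSuccEquiv K 1)
  rw [← MulEquiv.irreducible_iff e.toMulEquiv]
  have h1 : (1 : Fin 2) = Fin.succ 0 := rfl
  have himg : e.toMulEquiv
      ((MvPolynomial.X 0) ^ 2 * MvPolynomial.X 1 + MvPolynomial.X 0 * MvPolynomial.X 1 +
        MvPolynomial.C c * MvPolynomial.X 1 + 1) =
      Polynomial.C ((MvPolynomial.X 0) ^ 2 + MvPolynomial.X 0 + MvPolynomial.C c) *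
        Polynomial.X + 1 := by
    show e _ = _
    have hC : MvPolynomial.finSuccEquiv K 1 (MvPolynomial.C c) = Polynomial.C (MvPolynomial.C c) := by
      simp [MvPolynomial.finSuccEquiv_apply]
    simp only [hC, e, AlgEquiv.trans_apply, map_add, map_mul, map_pow, map_one,
      MvPolynomial.renameEquiv_apply, MvPolynomial.rename_X, MvPolynomial.rename_C,
      Equiv.swap_apply_left, Equiv.swap_apply_right, h1,
      MvPolynomial.finSuccEquiv_X_zero, MvPolynomial.finSuccEquiv_X_succ,
      MvPolynomial.finSuccEquiv_comp_C_eq_C]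
    ring
  rw [himg]
  apply linear_const_one_irreducible
  intro habs
  have := congrArg (fun p => MvPolynomial.coeff (Finsupp.single (0 : Fin 1) 2) p) habs
  simp [MvPolynomial.coeff_X_pow, MvPolynomial.coeff_X', MvPolynomial.coeff_C,
    Finsupp.single_eq_single_iff, eq_comm, Finsupp.single_eq_zero] at this
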